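/- Let A be an nBA and for a ∈ A and 1 ≤ i ≤ n define the i-th coordinate aᵢ = q(a, e₁,...,e₁, e₂, e₁,...,e₁) with e₂ in position i. If two elements a, b ∈ A have the same coordinates (aᵢ = bᵢ for all i), then a = b. -/
import Mathlib


/-- A pure Boolean-like algebra of dimension `n`: a type with constants `e₁,…,eₙ` and an
`(n+1)`-ary operation `q` satisfying `q(eᵢ,x̄) = xᵢ`, in which every element `c` is
`n`-central: (B1) `q(c,e₁,…,eₙ) = c`, (B2) `q(c,x,…,x) = x`, and (B3) `q(c,−)` commutes
with `q` itself. -/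
structure PNBA (n : ℕ) where
  A : Type
  e : Fin n → A
  q : A → (Fin n → A) → A
  q_e : ∀ (i : Fin n) (x : Fin n → A), q (e i) x = x i
  B1 : ∀ c : A, q c e = c
  B2 : ∀ (c x : A), q c (fun _ => x) = x
  B3q : ∀ (c : A) (a : Fin n → A) (m : Fin n → Fin n → A),
      q c (fun i => q (a i) (m i)) = q (q c a) (fun j => q c (fun i => m i j))

/-- The ternary operation `p(x,y,z) = q(x,y,z,e₃,…,eₙ)`. -/
def PNBA.p {n : ℕ} (B : PNBA (n + 2)) (x y z : B.A) : B.A :=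
  B.q x (fun i => if i = 0 then y else if i = 1 then z else B.e i)

/-- Membership in `B_A`, the Boolean algebra of `2`-central elements of the `nBA`:
`x ∈ B_A` iff `p(x,y,y) = y` for all `y`. -/
def PNBA.inBA {n : ℕ} (B : PNBA (n + 2)) (x : B.A) : Prop :=
  ∀ y : B.A, B.p x y y = y

/-- The `i`-th coordinate of an element `a`:
`aᵢ = q(a, e₁,…,e₁, e₂, e₁,…,e₁)` with `e₂` in position `i`. -/
def PNBA.coord {n : ℕ} (B : PNBA (n + 2)) (a : B.A) (i : Fin (n + 2)) : B.A :=
  B.q a (fun k => if k = i then B.e 1 else B.e 0)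

namespace PNBA

variable {n : ℕ} (B : PNBA (n + 2))

lemma p_e0 (y z : B.A) : B.p (B.e 0) y z = y := by
  simp [PNBA.p, B.q_e]

lemma p_e1 (y z : B.A) : B.p (B.e 1) y z = z := by
  have h10 : (1 : Fin (n + 2)) ≠ 0 := by
    simp [Fin.ext_iff]
  simp [PNBA.p, B.q_e, h10]

/-- `q c (·)` commutes with `p`. -/
lemma q_p (c : B.A) (x y z : Fin (n + 2) → B.A) :
    B.q c (fun i => B.p (x i) (y i) (z i)) = B.p (B.q c x) (B.q c y) (B.q c z) := by
  unfold PNBA.p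
  rw [B.B3q c x (fun i j => if j = 0 then y i else if j = 1 then z i else B.e j)]
  congr 1
  funext j
  by_cases h0 : j = 0
  · simp [h0]
  · by_cases h1 : j = 1
    · simp [h0, h1]
    · simp [h0, h1, B.B2]

/-- The selector term `G d k = p (d k) (G d (k+1)) (e k)` (and `e 0` past the end). -/
def G (d : Fin (n + 2) → B.A) : ℕ → B.A
  | k =>
    if h : k < n + 2 then B.p (d ⟨k, h⟩) (G d (k + 1)) (B.e ⟨k, h⟩) else B.e 0
termination_by k => n + 2 - k
decreasing_by omega

lemma G_lt (d : Fin (n + 2) → B.A) (k : ℕ) (h : k < n + 2) :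
    B.G d k = B.p (d ⟨k, h⟩) (B.G d (k + 1)) (B.e ⟨k, h⟩) := by
  rw [G]; simp [h]

lemma G_ge (d : Fin (n + 2) → B.A) (k : ℕ) (h : ¬ k < n + 2) :
    B.G d k = B.e 0 := by
  rw [G]; simp [h]

/-- `G` evaluated on the `i`-th unit vector gives `e i`. -/
lemma G_delta (i : Fin (n + 2)) :
    ∀ m k, k + m = i.val →
      B.G (fun j => if i = j then B.e 1 else B.e 0) k = B.e i := by
  intro m
  induction m with
  | zero =>
      intro k hk
      have hk' : k < n + 2 := by omega
      rw [B.G_lt _ k hk']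
      have hi : (⟨k, hk'⟩ : Fin (n + 2)) = i := by
        apply Fin.ext; simp; omega
      rw [hi]
      simp [B.p_e1]
  | succ m ih =>
      intro k hk
      have hk' : k < n + 2 := by omega
      rw [B.G_lt _ k hk']
      have hi : i ≠ (⟨k, hk'⟩ : Fin (n + 2)) := by
        intro hcon
        have := congrArg Fin.val hcon
        simp at this; omega
      rw [if_neg hi, B.p_e0]
      exact ih (k + 1) (by omega)

/-- `q c (·)` commutes with `G` (applied rowwise). -/
lemma q_G : ∀ m k, n + 2 ≤ k + m → ∀ (c : B.A) (d : Fin (n + 2) → Fin (n + 2) → B.A),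
    B.q c (fun i => B.G (d i) k) = B.G (fun j => B.q c (fun i => d i j)) k := by
  intro m
  induction m with
  | zero =>
      intro k hk c d
      have h : ¬ k < n + 2 := by omega
      simp only [B.G_ge _ k h]
      exact B.B2 c _
  | succ m ih =>
      intro k hk c d
      by_cases h : k < n + 2
      · rw [B.G_lt _ k h]
        have : B.q c (fun i => B.G (d i) k)
            = B.q c (fun i => B.p (d i ⟨k, h⟩) (B.G (d i) (k + 1)) (B.e ⟨k, h⟩)) := by
          congr 1
          funext i
          rw [B.G_lt _ k h]
        rw [this, B.q_p, B.B2, ih (k + 1) (by omega)]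
      · simp only [B.G_ge _ k h]
        exact B.B2 c _

/-- Every element is recovered from its coordinates via `G`. -/
lemma recover (x : B.A) : x = B.G (B.coord x) 0 := by
  conv_lhs => rw [← B.B1 x]
  have he : B.e = fun i => B.G (fun j => if i = j then B.e 1 else B.e 0) 0 := by
    funext i
    exact (B.G_delta i i.val 0 (by omega)).symm
  conv_lhs => rw [he]
  rw [B.q_G (n + 2) 0 (by omega) x (fun i j => if i = j then B.e 1 else B.e 0)]
  rfl

end PNBA

/-- If two elements of an `nBA` have the same coordinates, then they are equal. -/
theorem eq_of_coord_eq {n : ℕ} (B : PNBA (n + 2)) (a b : B.A)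
    (h : ∀ i : Fin (n + 2), B.coord a i = B.coord b i) : a = b := by
  rw [B.recover a, B.recover b, funext h]
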